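/- For z > 2 and b > 0, the improper integral ∫_ℓ^∞ x·(1 - 1/(1 + b·x^{-z})) dx converges for every ℓ > 0 and equals (b·ℓ^{2-z}/(z-2)) · ₂F₁(1, 1 - 2/z; 2 - 2/z; -b·ℓ^{-z}). -/

import Mathlib

/-- `₂F₁(1, β; β + 1; -y)` via its Euler integral representation. -/
noncomputable def hyp2F1one (β y : ℝ) : ℝ :=
  β * ∫ t in (0:ℝ)..1, t ^ (β - 1) / (1 + y * t)

open MeasureTheory Set

/-- The improper interference integral converges and equals the closed hypergeometric form. -/
theorem stmt4 (b z ℓ : ℝ) (hb : 0 < b) (hz : 2 < z) (hl : 0 < ℓ) :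
    MeasureTheory.IntegrableOn (fun x : ℝ => x * (1 - 1 / (1 + b * x ^ (-z)))) (Set.Ioi ℓ) ∧
    ∫ x in Set.Ioi ℓ, x * (1 - 1 / (1 + b * x ^ (-z)))
      = (b * ℓ ^ (2 - z) / (z - 2)) * hyp2F1one (1 - 2 / z) (b * ℓ ^ (-z)) := by
  have hz0 : (0:ℝ) < z := by linarith
  have hzne : z ≠ 0 := ne_of_gt hz0
  set y : ℝ := b * ℓ ^ (-z) with hy
  have hy0 : 0 < y := mul_pos hb (Real.rpow_pos_of_pos hl _)
  set C : ℝ := b * ℓ ^ (2 - z) / z with hC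
  set g : ℝ → ℝ := fun x : ℝ => x * (1 - 1 / (1 + b * x ^ (-z))) with hg
  set f : ℝ → ℝ := fun t : ℝ => ℓ * t ^ (-1/z) with hf
  set f' : ℝ → ℝ := fun t : ℝ => ℓ * ((-1/z) * t ^ (-1/z - 1)) with hf'
  have hmeas : MeasurableSet (Ioo (0:ℝ) 1) := measurableSet_Ioo
  -- inverse rpow facts
  have hself : ∀ t : ℝ, 0 < t → (t ^ (-1/z)) ^ (-z) = t := by
    intro t ht
    rw [← Real.rpow_mul ht.le, show (-1/z) * (-z) = 1 by field_simp, Real.rpow_one]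
  have hderiv : ∀ t ∈ Ioo (0:ℝ) 1, HasDerivWithinAt f (f' t) (Ioo 0 1) t := by
    intro t ht
    exact ((Real.hasDerivAt_rpow_const (Or.inl (ne_of_gt ht.1))).const_mul ℓ).hasDerivWithinAt
  have hinj : InjOn f (Ioo 0 1) := by
    intro s hs t ht hst
    have h1 : ℓ * s ^ (-1/z) = ℓ * t ^ (-1/z) := hst
    have h2 : s ^ (-1/z) = t ^ (-1/z) := mul_left_cancel₀ (ne_of_gt hl) h1
    have := congrArg (fun u : ℝ => u ^ (-z)) h2
    simpa [hself s hs.1, hself t ht.1] using this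
  have himg : f '' Ioo 0 1 = Ioi ℓ := by
    ext x
    constructor
    · rintro ⟨t, ht, rfl⟩
      have h1 : 1 < t ^ (-1/z) := by
        rw [Real.one_lt_rpow_iff_of_pos ht.1]
        right
        exact ⟨ht.2, div_neg_of_neg_of_pos (by norm_num) hz0⟩
      have : ℓ * 1 < ℓ * t ^ (-1/z) := by
        exact (mul_lt_mul_iff_right₀ hl).2 h1
      simpa [hf] using this
    · intro hx
      have hx' : (1:ℝ) < x / ℓ := (one_lt_div hl).2 hx
      refine ⟨(x / ℓ) ^ (-z), ⟨Real.rpow_pos_of_pos (div_pos (hl.trans hx) hl) _,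
        Real.rpow_lt_one_of_one_lt_of_neg hx' (by linarith)⟩, ?_⟩
      show ℓ * ((x / ℓ) ^ (-z)) ^ (-1/z) = x
      rw [← Real.rpow_mul (by positivity), show (-z) * (-1/z) = 1 by field_simp,
        Real.rpow_one]
      field_simp
  -- the pointwise identity after substitution
  have hkey : ∀ t ∈ Ioo (0:ℝ) 1, |f' t| • g (f t) = C * (t ^ (-2/z) / (1 + y * t)) := by
    intro t ht
    have ht0 : 0 < t := ht.1
    have hne : -1/z < 0 := div_neg_of_neg_of_pos (by norm_num) hz0
    have hpow0 : (0:ℝ) ≤ t ^ (-1/z - 1) := (Real.rpow_pos_of_pos ht0 _).le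
    have habs : |f' t| = ℓ * ((1/z) * t ^ (-1/z - 1)) := by
      rw [hf', abs_of_nonpos (mul_nonpos_of_nonneg_of_nonpos hl.le
        (mul_nonpos_of_nonpos_of_nonneg hne.le hpow0))]
      ring
    have hftz : (f t) ^ (-z) = ℓ ^ (-z) * t := by
      rw [hf]
      rw [Real.mul_rpow hl.le (Real.rpow_pos_of_pos ht0 _).le, hself t ht0]
    have hD : (0:ℝ) < 1 + y * t := by positivity
    have hgft : g (f t) = ℓ * t ^ (-1/z) * (y * t / (1 + y * t)) := by
      rw [hg]
      show f t * (1 - 1 / (1 + b * (f t) ^ (-z))) = _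
      rw [hftz, hf]
      have : b * (ℓ ^ (-z) * t) = y * t := by rw [hy]; ring
      rw [this]
      congr 1
      field_simp
      ring
    rw [habs, hgft, smul_eq_mul]
    have hrpow : t ^ (-1/z - 1) * t ^ (-1/z) * t = t ^ (-2/z) := by
      calc t ^ (-1/z - 1) * t ^ (-1/z) * t
          = t ^ (-1/z - 1) * t ^ (-1/z) * t ^ (1:ℝ) := by rw [Real.rpow_one]
        _ = t ^ ((-1/z - 1) + (-1/z) + 1) := by
            rw [← Real.rpow_add ht0, ← Real.rpow_add ht0]
        _ = t ^ (-2/z) := by rw [show (-1/z - 1) + (-1/z) + 1 = -2/z by ring]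
    have hl2 : ℓ * ℓ * ℓ ^ (-z) = ℓ ^ (2 - z) := by
      rw [show (2:ℝ) - z = 1 + 1 + (-z) by ring, Real.rpow_add hl, Real.rpow_add hl,
        Real.rpow_one]
    have expand : ℓ * (1 / z * t ^ (-1 / z - 1)) * (ℓ * t ^ (-1 / z) * (y * t / (1 + y * t)))
        = (ℓ * ℓ * y / z) * ((t ^ (-1/z - 1) * t ^ (-1/z) * t) / (1 + y * t)) := by
      field_simp
    rw [expand, hrpow, hC, hy]
    have : ℓ * ℓ * (b * ℓ ^ (-z)) = b * ℓ ^ (2 - z) := by rw [← hl2]; ring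
    rw [this]
  -- integrability of the substituted integrand
  have hbase : IntegrableOn (fun t : ℝ => t ^ (-2/z)) (Ioo (0:ℝ) 1) := by
    have h1 : (-1:ℝ) < -2/z := by
      rw [neg_lt, neg_div, neg_neg]
      rw [div_lt_one hz0]; linarith
    have := (intervalIntegral.intervalIntegrable_rpow' (a := 0) (b := 1) h1)
    rw [intervalIntegrable_iff_integrableOn_Ioc_of_le (by norm_num : (0:ℝ) ≤ 1)] at this
    exact this.mono_set Ioo_subset_Ioc_self
  have hcontF : ContinuousOn (fun t : ℝ => C * (t ^ (-2/z) / (1 + y * t))) (Ioo 0 1) := by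
    apply ContinuousOn.mul continuousOn_const
    apply ContinuousOn.div
    · exact fun t ht => (Real.continuousAt_rpow_const t _ (Or.inl (ne_of_gt ht.1))).continuousWithinAt
    · fun_prop
    · intro t ht
      have : (0:ℝ) < 1 + y * t := by have := ht.1; positivity
      exact ne_of_gt this
  have hintF : IntegrableOn (fun t : ℝ => C * (t ^ (-2/z) / (1 + y * t))) (Ioo (0:ℝ) 1) := by
    apply Integrable.mono' ((hbase.const_mul |C|))
      (hcontF.aestronglyMeasurable hmeas)
    rw [ae_restrict_iff' hmeas]
    filter_upwards with t ht
    have ht0 := ht.1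
    have hpow : (0:ℝ) < t ^ (-2/z) := Real.rpow_pos_of_pos ht0 _
    have hD : (1:ℝ) ≤ 1 + y * t := by nlinarith
    have hdivle : t ^ (-2/z) / (1 + y * t) ≤ t ^ (-2/z) := by
      rw [div_le_iff₀ (by linarith)]
      nlinarith
    have hdiv0 : (0:ℝ) ≤ t ^ (-2/z) / (1 + y * t) := by positivity
    rw [norm_mul, Real.norm_eq_abs, Real.norm_eq_abs, abs_of_nonneg hdiv0]
    exact mul_le_mul_of_nonneg_left hdivle (abs_nonneg C)
  -- integrability of g on Ioi ℓ
  have hint : IntegrableOn g (Ioi ℓ) := by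
    rw [← himg, integrableOn_image_iff_integrableOn_abs_deriv_smul hmeas hderiv hinj g]
    exact hintF.congr_fun (fun t ht => (hkey t ht).symm) hmeas
  refine ⟨hint, ?_⟩
  -- the integral computation
  have h1 : ∫ x in Ioi ℓ, g x = ∫ t in Ioo (0:ℝ) 1, C * (t ^ (-2/z) / (1 + y * t)) := by
    rw [← himg, integral_image_eq_integral_abs_deriv_smul hmeas hderiv hinj g]
    exact setIntegral_congr_fun hmeas hkey
  show ∫ x in Ioi ℓ, g x = _
  rw [h1, integral_const_mul, hyp2F1one]
  have hI : ∫ t in (0:ℝ)..1, t ^ ((1 - 2/z) - 1) / (1 + y * t)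
      = ∫ t in Ioo (0:ℝ) 1, t ^ (-2/z) / (1 + y * t) := by
    rw [intervalIntegral.integral_of_le (by norm_num : (0:ℝ) ≤ 1),
      ← integral_Ioc_eq_integral_Ioo]
    congr 1
    ext t
    rw [show (1 - 2/z) - 1 = -2/z by ring]
  rw [hI]
  have hzz : z - 2 ≠ 0 := by linarith
  rw [hC]
  rw [show b * ℓ ^ (2 - z) / (z - 2) * ((1 - 2 / z) * ∫ t in Ioo (0:ℝ) 1, t ^ (-2/z) / (1 + y * t))
    = (b * ℓ ^ (2 - z) / (z - 2) * (1 - 2 / z)) * ∫ t in Ioo (0:ℝ) 1, t ^ (-2/z) / (1 + y * t) by ring]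
  congr 1
  field_simp
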